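/- Let n be a positive natural number, F an n × n real matrix, and H a 1 × n real matrix (a row vector). Assume the pair (F, H) is observable, i.e., the n·n × n Kalman observability matrix formed by stacking H, HF, HF², …, HF^{n−1} has rank n (equivalently, the intersection of the kernels of H F^k for k = 0, …, n−1 is {0}). Let λ_1, …, λ_n be pairwise distinct real numbers, none of which is an eigenvalue of F. Then the linear map T : ℝⁿ → ℝⁿ defined by T(x) = (H (F − λ_1 I)^{-1} x, …, H (F − λ_n I)^{-1} x) is bijective. -/

import Mathlib

set_option autoImplicit false
set_option maxHeartbeats 1000000

open Polynomial Matrix in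
private lemma kkl_core (n : ℕ) (hn : 0 < n)
    (F : Matrix (Fin n) (Fin n) ℝ) (H : Matrix (Fin 1) (Fin n) ℝ)
    (hobs : ∀ x : Fin n → ℝ,
      (∀ k : ℕ, k < n → (H * F ^ k).mulVec x = 0) → x = 0)
    (l : Fin n → ℝ) (hl : Function.Injective l)
    (hres : ∀ i : Fin n, (F - l i • (1 : Matrix (Fin n) (Fin n) ℝ)).det ≠ 0)
    (x : Fin n → ℝ)
    (hx : ∀ i, H.mulVec ((F - l i • (1 : Matrix (Fin n) (Fin n) ℝ))⁻¹.mulVec x) 0 = 0) :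
    x = 0 := by
  classical
  set A : Matrix (Fin n) (Fin n) ℝ[X] := F.map C - (X : ℝ[X]) • 1 with hA
  have hAneg : A = -(charmatrix F) := by
    rw [hA, charmatrix, neg_sub, Matrix.scalar_apply, ← Matrix.smul_one_eq_diagonal,
      RingHom.mapMatrix_apply]
  set d : ℝ[X] := A.det with hd
  have hdet : d = (-1 : ℝ[X]) ^ n * F.charpoly := by
    rw [hd, hAneg, Matrix.det_neg, Fintype.card_fin]; rfl
  have hcn : F.charpoly.coeff n = 1 := by
    have h := (Matrix.charpoly_monic F).coeff_natDegree
    rwa [Matrix.charpoly_natDegree_eq_dim, Fintype.card_fin] at h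
  have hC : ((-1 : ℝ[X])) ^ n = C ((-1 : ℝ) ^ n) := by
    rw [map_pow, map_neg, _root_.map_one]
  have hdn : d.coeff n = (-1 : ℝ) ^ n := by
    rw [hdet, hC, Polynomial.coeff_C_mul, hcn, mul_one]
  have hdhigh : ∀ m, n < m → d.coeff m = 0 := by
    intro m hm
    rw [hdet, hC, Polynomial.coeff_C_mul,
      Polynomial.coeff_eq_zero_of_natDegree_lt, mul_zero]
    rw [Matrix.charpoly_natDegree_eq_dim, Fintype.card_fin]; exact hm
  set w : Fin n → ℝ[X] := A.adjugate.mulVec (fun j => C (x j)) with hw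
  set W : ℕ → Fin n → ℝ := fun m j => (w j).coeff m with hWdef
  have h1 : A.mulVec w = fun j => d * C (x j) := by
    rw [hw, Matrix.mulVec_mulVec, Matrix.mul_adjugate, Matrix.smul_mulVec,
      Matrix.one_mulVec]
    funext j; simp [smul_eq_mul, hd]
  have hrel : ∀ m : ℕ, F.mulVec (W (m+1)) - W m = d.coeff (m+1) • x := by
    intro m
    funext j
    have h2 := congrArg (fun p => Polynomial.coeff p (m+1)) (congrFun h1 j)
    have hAj : A.mulVec w j = (∑ j', C (F j j') * w j') - X * w j := by
      simp only [Matrix.mulVec, dotProduct, hA, Matrix.sub_apply, Matrix.map_apply,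
        Matrix.smul_apply, Matrix.one_apply, smul_eq_mul, mul_ite, mul_one, mul_zero,
        sub_mul, ite_mul, zero_mul, Finset.sum_sub_distrib, Finset.sum_ite_eq,
        Finset.mem_univ, if_true]
    rw [hAj] at h2
    simp only [Polynomial.coeff_sub, Polynomial.finset_sum_coeff, Polynomial.coeff_C_mul,
      Polynomial.coeff_X_mul, Polynomial.coeff_mul_C] at h2
    simpa [Matrix.mulVec, dotProduct, hWdef, smul_eq_mul] using h2
  have hWhigh : ∀ m, n ≤ m → W m = 0 := by
    obtain ⟨N, hN⟩ : ∃ N, ∀ m, N ≤ m → W m = 0 := by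
      refine ⟨(Finset.univ.sup fun j => (w j).natDegree) + 1, fun m hm => ?_⟩
      funext j
      exact Polynomial.coeff_eq_zero_of_natDegree_lt
        (lt_of_lt_of_le (Nat.lt_succ_of_le
          (Finset.le_sup (f := fun j => (w j).natDegree) (Finset.mem_univ j))) hm)
    have main : ∀ t m, n ≤ m → N ≤ m + t → W m = 0 := by
      intro t
      induction t with
      | zero => intro m hm hNm; exact hN m (by omega)
      | succ t ih =>
        intro m hm hNm
        by_cases h : N ≤ m
        · exact hN m h
        · have h1' : W (m+1) = 0 := ih (m+1) (by omega) (by omega)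
          have h2 := hrel m
          rw [h1', Matrix.mulVec_zero, hdhigh (m+1) (by omega), zero_smul, zero_sub,
            neg_eq_zero] at h2
          exact h2
    intro m hm; exact main N m hm (by omega)
  set q : ℝ[X] := ∑ j, C (H 0 j) * w j with hq
  have hqcoeff : ∀ m, q.coeff m = ∑ j, H 0 j * W m j := by
    intro m
    rw [hq, Polynomial.finset_sum_coeff]
    exact Finset.sum_congr rfl fun j _ => Polynomial.coeff_C_mul _
  have hqeval0 : ∀ i, q.eval (l i) = 0 := by
    intro i
    set Mi : Matrix (Fin n) (Fin n) ℝ := F - l i • 1 with hMi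
    have hdeti := hres i
    have hadj : H.mulVec (Mi.adjugate.mulVec x) 0 = 0 := by
      have h0 := hx i
      rw [Matrix.inv_def, Matrix.smul_mulVec, Matrix.mulVec_smul] at h0
      have hinv : Ring.inverse Mi.det = Mi.det⁻¹ := congrFun Ring.inverse_eq_inv' _
      rw [hinv] at h0
      have h0' : Mi.det⁻¹ * (H.mulVec (Mi.adjugate.mulVec x) 0) = 0 := h0
      rcases mul_eq_zero.mp h0' with h | h
      · exact absurd h (inv_ne_zero hdeti)
      · exact h
    have hmap : A.map (Polynomial.eval (l i)) = Mi := by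
      funext a b
      by_cases hab : a = b <;>
        simp [hA, hMi, hab, Matrix.map_apply, Matrix.sub_apply, Matrix.smul_apply,
          Matrix.one_apply]
    have hadjmap : A.adjugate.map (Polynomial.eval (l i)) = Mi.adjugate := by
      have := (Polynomial.evalRingHom (l i)).map_adjugate A
      simp only [RingHom.mapMatrix_apply] at this
      rw [show (Matrix.map A ⇑(Polynomial.evalRingHom (l i))) = Mi from hmap] at this
      exact this
    have hevalw : ∀ j, (w j).eval (l i) = (Mi.adjugate.mulVec x) j := by
      intro j
      have := congrFun (congrArg (fun M => M.mulVec x) hadjmap) j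
      rw [hw]
      simp only [Matrix.mulVec, dotProduct, Polynomial.eval_finset_sum,
        Polynomial.eval_mul, Polynomial.eval_C] at *
      rw [← this]
      simp [Matrix.map_apply]
    rw [hq]
    simp only [Polynomial.eval_finset_sum, Polynomial.eval_mul, Polynomial.eval_C, hevalw]
    simpa [Matrix.mulVec, dotProduct] using hadj
  have hqdeg : q.natDegree ≤ n - 1 := by
    refine Polynomial.natDegree_le_iff_coeff_eq_zero.mpr fun m hm => ?_
    rw [hqcoeff]
    have : W m = 0 := hWhigh m (by omega)
    simp [this]
  have hq0 : q = 0 :=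
    Polynomial.eq_zero_of_natDegree_lt_card_of_eval_eq_zero q hl hqeval0
      (by rw [Fintype.card_fin]; omega)
  have hHW : ∀ m, ∑ j, H 0 j * W m j = 0 := by
    intro m; rw [← hqcoeff, hq0]; simp
  have hWform : ∀ k, k < n →
      W (n-1-k) = -∑ j ∈ Finset.range (k+1), d.coeff (n-k+j) • (F^j).mulVec x := by
    intro k
    induction k with
    | zero =>
      intro _
      have h2 := hrel (n-1)
      rw [show n-1+1 = n by omega, hWhigh n le_rfl, Matrix.mulVec_zero, zero_sub] at h2
      rw [show n-1-0 = n-1 by omega]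
      rw [neg_eq_iff_eq_neg] at h2
      rw [h2]
      simp [Finset.sum_range_one, Matrix.one_mulVec]
    | succ k ih =>
      intro hk1
      have hk : k < n := by omega
      have ihh := ih hk
      have h2 := hrel (n-1-(k+1))
      rw [show n-1-(k+1)+1 = n-1-k by omega, ihh] at h2
      have h3 : W (n-1-(k+1)) =
          F.mulVec (-∑ j ∈ Finset.range (k+1), d.coeff (n-k+j) • (F^j).mulVec x)
            - d.coeff (n-1-k) • x := by
        rw [← h2]; abel
      rw [h3, Matrix.mulVec_neg]
      have hsum : F.mulVec (∑ j ∈ Finset.range (k+1), d.coeff (n-k+j) • (F^j).mulVec x)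
          = ∑ j ∈ Finset.range (k+1), d.coeff (n-k+j) • (F^(j+1)).mulVec x := by
        have : F.mulVec (∑ j ∈ Finset.range (k+1), d.coeff (n-k+j) • (F^j).mulVec x)
            = F.mulVecLin (∑ j ∈ Finset.range (k+1), d.coeff (n-k+j) • (F^j).mulVec x) := rfl
        rw [this, map_sum]
        refine Finset.sum_congr rfl fun j hj => ?_
        rw [_root_.map_smul]
        simp [Matrix.mulVecLin_apply, Matrix.mulVec_mulVec, pow_succ']
      rw [hsum]
      rw [Finset.sum_range_succ' _ (k+1)]
      have e1 : ∀ j, n-(k+1)+(j+1) = n-k+j := by intro j; omega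
      have e2 : n-(k+1)+0 = n-1-k := by omega
      simp only [e1, e2, pow_zero, Matrix.one_mulVec]
      abel
  have hfin : ∀ k, k < n → ∑ j', H 0 j' * ((F^k).mulVec x) j' = 0 := by
    intro k
    induction k using Nat.strong_induction_on with
    | _ k ih =>
      intro hk
      have h1' := hHW (n-1-k)
      rw [hWform k hk] at h1'
      simp only [Pi.neg_apply, Finset.sum_apply, Pi.smul_apply, smul_eq_mul, mul_neg,
        Finset.sum_neg_distrib, neg_eq_zero, Finset.mul_sum] at h1'
      rw [Finset.sum_comm] at h1'
      have h1'' : ∑ t ∈ Finset.range (k+1),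
          d.coeff (n-k+t) * (∑ j', H 0 j' * ((F^t).mulVec x) j') = 0 := by
        rw [← h1']
        refine Finset.sum_congr rfl fun t _ => ?_
        rw [Finset.mul_sum]
        exact Finset.sum_congr rfl fun j _ => by ring
      rw [Finset.sum_range_succ] at h1''
      have hz : ∑ t ∈ Finset.range k,
          d.coeff (n-k+t) * (∑ j', H 0 j' * ((F^t).mulVec x) j') = 0 := by
        refine Finset.sum_eq_zero fun t ht => ?_
        have ht' := Finset.mem_range.mp ht
        rw [ih t ht' (by omega), mul_zero]
      rw [hz, zero_add, show n-k+k = n by omega, hdn] at h1''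
      have hne : ((-1 : ℝ) ^ n) ≠ 0 := by positivity
      exact (mul_eq_zero.mp h1'').resolve_left hne
  apply hobs
  intro k hk
  funext i
  have hi : i = 0 := Subsingleton.elim i 0
  subst hi
  rw [← Matrix.mulVec_mulVec]
  simpa [Matrix.mulVec, dotProduct] using hfin k hk

/-- Finite-dimensional Kazantzis–Kravaris/Luenberger invertibility: for an observable
single-output pair `(F, H)` on `ℝⁿ` and `n` pairwise distinct reals `λᵢ` that are not
eigenvalues of `F`, the map `x ↦ (H (F − λᵢ I)⁻¹ x)ᵢ` is bijective. -/
theorem stmt14 (n : ℕ) (hn : 0 < n)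
    (F : Matrix (Fin n) (Fin n) ℝ) (H : Matrix (Fin 1) (Fin n) ℝ)
    (hobs : ∀ x : Fin n → ℝ,
      (∀ k : ℕ, k < n → (H * F ^ k).mulVec x = 0) → x = 0)
    (l : Fin n → ℝ) (hl : Function.Injective l)
    (hres : ∀ i : Fin n, (F - l i • (1 : Matrix (Fin n) (Fin n) ℝ)).det ≠ 0) :
    Function.Bijective (fun x : Fin n → ℝ =>
      fun i : Fin n =>
        H.mulVec ((F - l i • (1 : Matrix (Fin n) (Fin n) ℝ))⁻¹.mulVec x) 0) := by
  classical
  set T : (Fin n → ℝ) →ₗ[ℝ] (Fin n → ℝ) :=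
    { toFun := fun x : Fin n → ℝ =>
        fun i : Fin n =>
          H.mulVec ((F - l i • (1 : Matrix (Fin n) (Fin n) ℝ))⁻¹.mulVec x) 0
      map_add' := by
        intro a b
        funext i
        simp [Matrix.mulVec_add]
      map_smul' := by
        intro c a
        funext i
        simp [Matrix.mulVec_smul] } with hT
  have hinj : Function.Injective T := by
    intro a b hab
    have hz : ∀ i, H.mulVec ((F - l i • (1 : Matrix (Fin n) (Fin n) ℝ))⁻¹.mulVec (a - b)) 0
        = 0 := by
      intro i
      have h := congrFun hab i
      simp only [hT, LinearMap.coe_mk, AddHom.coe_mk] at h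
      simpa [Matrix.mulVec_sub, sub_eq_zero] using h
    have := kkl_core n hn F H hobs l hl hres (a - b) hz
    exact sub_eq_zero.mp this
  exact ⟨hinj, (LinearMap.injective_iff_surjective (f := T)).mp hinj⟩
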